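/- arXiv:0911.4068 — 3 statements merged into one kernel-verified Lean document; each statement's English description precedes it below -/
import Mathlib

section
/- For positive integers p and q, the determinant of the 2×2 Hermitian matrix (h_{α β̄}) obtained from the Kähler potential u(z₁,z₂) = log(1 + |z₁|^{2p} + |z₂|^{2q}) on ℂ², i.e. h_{α β̄} = ∂²u/∂z_α ∂z̄_β, equals p²q²·|z₁|^{2(p-1)}·|z₂|^{2(q-1)} / (1 + |z₁|^{2p} + |z₂|^{2q})³ at every point where z₁, z₂ ≠ 0. -/
open Complex

/-- The mixed Wirtinger derivative `∂²F/∂z_α∂z̄_β` of a function of `(z₁,z₂)`, computed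
via the standard polarization: `F` is given as a function of the holomorphic variables
`z` and the antiholomorphic variables `w̄`, differentiated separately and evaluated at
`w = conj z`. -/
noncomputable def wirt (F : (Fin 2 → ℂ) → (Fin 2 → ℂ) → ℂ) (z : Fin 2 → ℂ)
    (α β : Fin 2) : ℂ :=
  deriv (fun s => deriv (fun t =>
      F (Function.update z α s)
        (Function.update (fun i => (starRingEnd ℂ) (z i)) β t))
    ((starRingEnd ℂ) (z β))) (z α)

/-- The Kähler potential `u = log(1 + |z₁|^{2p} + |z₂|^{2q})`, polarized. -/
noncomputable def upol (p q : ℕ) : (Fin 2 → ℂ) → (Fin 2 → ℂ) → ℂ :=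
  fun z w => Complex.log (1 + (z 0 * w 0)^p + (z 1 * w 1)^q)

lemma inner_diag (m : ℕ) (K s w : ℂ) (h : K + (s*w)^(m+1) ∈ slitPlane) :
    deriv (fun t => Complex.log (K + (s*t)^(m+1))) w
      = ((m:ℂ)+1) * s^(m+1) * w^m / (K + (s*w)^(m+1)) := by
  have hg : HasDerivAt (fun t => K + (s*t)^(m+1))
      (((m:ℕ)+1 : ℕ) * (s*w)^m * s) w := by
    have h1 : HasDerivAt (fun t : ℂ => s*t) s w := by
      simpa using (hasDerivAt_id w).const_mul s
    have := (hasDerivAt_pow (m+1) (s*w)).comp w h1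
    simpa [mul_comm, mul_assoc, mul_left_comm] using this.const_add K
  have hd : HasDerivAt (fun t => Complex.log (K + (s*t)^(m+1)))
      ((K + (s*w)^(m+1))⁻¹ * (((m:ℕ)+1 : ℕ) * (s*w)^m * s)) w :=
    by have := (Complex.hasDerivAt_log h).comp w hg; exact this
  rw [hd.deriv]
  have hne : K + (s*w)^(m+1) ≠ 0 := Complex.slitPlane_ne_zero h
  field_simp
  push_cast
  ring

lemma outer_diag (m : ℕ) (a c K : ℂ) (hD : K + (a*c)^(m+1) ∈ slitPlane) :
    deriv (fun s => deriv (fun t => Complex.log (K + (s*t)^(m+1))) c) a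
      = ((m:ℂ)+1)^2 * (a*c)^m * K / (K + (a*c)^(m+1))^2 := by
  have hMne : K + (a*c)^(m+1) ≠ 0 := Complex.slitPlane_ne_zero hD
  have hcont : ContinuousAt (fun s : ℂ => K + (s*c)^(m+1)) a := by fun_prop
  have hev : ∀ᶠ s in nhds a, K + (s*c)^(m+1) ∈ slitPlane :=
    hcont.eventually_mem (Complex.isOpen_slitPlane.mem_nhds hD)
  have hfe : (fun s => deriv (fun t => Complex.log (K + (s*t)^(m+1))) c)
      =ᶠ[nhds a] fun s => ((m:ℂ)+1) * s^(m+1) * c^m / (K + (s*c)^(m+1)) :=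
    hev.mono fun s hs => inner_diag m K s c hs
  rw [hfe.deriv_eq]
  have hN : HasDerivAt (fun s : ℂ => ((m:ℂ)+1) * s^(m+1) * c^m)
      (((m:ℂ)+1) * (((m:ℕ)+1 : ℕ) * a^m) * c^m) a := by
    have := (hasDerivAt_pow (m+1) a).const_mul ((m:ℂ)+1)
    simpa using this.mul_const (c^m)
  have hM : HasDerivAt (fun s : ℂ => K + (s*c)^(m+1))
      (((m:ℕ)+1 : ℕ) * (a*c)^m * c) a := by
    have h1 : HasDerivAt (fun s : ℂ => s*c) c a := by
      simpa using (hasDerivAt_id a).mul_const c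
    have := (hasDerivAt_pow (m+1) (a*c)).comp a h1
    simpa [mul_comm, mul_assoc, mul_left_comm] using this.const_add K
  rw [(hN.fun_div hM hMne).deriv]
  push_cast
  field_simp
  ring

lemma outer_off (m n : ℕ) (a c v w : ℂ)
    (hD : (1 + (a*c)^(m+1)) + (v*w)^(n+1) ∈ slitPlane) :
    deriv (fun s => deriv (fun t =>
        Complex.log ((1 + (s*c)^(m+1)) + (v*t)^(n+1))) w) a
      = -(((m:ℂ)+1) * ((n:ℂ)+1) * (a*c)^m * (v*w)^n * v * c)
          / ((1 + (a*c)^(m+1)) + (v*w)^(n+1))^2 := by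
  have hMne : (1 + (a*c)^(m+1)) + (v*w)^(n+1) ≠ 0 := Complex.slitPlane_ne_zero hD
  have hcont : ContinuousAt (fun s : ℂ => (1 + (s*c)^(m+1)) + (v*w)^(n+1)) a := by fun_prop
  have hev : ∀ᶠ s in nhds a, (1 + (s*c)^(m+1)) + (v*w)^(n+1) ∈ slitPlane :=
    hcont.eventually_mem (Complex.isOpen_slitPlane.mem_nhds hD)
  have hfe : (fun s => deriv (fun t =>
        Complex.log ((1 + (s*c)^(m+1)) + (v*t)^(n+1))) w)
      =ᶠ[nhds a] fun s => ((n:ℂ)+1) * v^(n+1) * w^n / ((1 + (s*c)^(m+1)) + (v*w)^(n+1)) :=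
    hev.mono fun s hs => inner_diag n (1 + (s*c)^(m+1)) v w hs
  rw [hfe.deriv_eq]
  have hM : HasDerivAt (fun s : ℂ => (1 + (s*c)^(m+1)) + (v*w)^(n+1))
      (((m:ℕ)+1 : ℕ) * (a*c)^m * c) a := by
    have h1 : HasDerivAt (fun s : ℂ => s*c) c a := by
      simpa using (hasDerivAt_id a).mul_const c
    have h2 := ((hasDerivAt_pow (m+1) (a*c)).comp a h1).const_add (1:ℂ)
    simpa [mul_comm, mul_assoc, mul_left_comm] using h2.add_const ((v*w)^(n+1))
  have hN : HasDerivAt (fun _ : ℂ => ((n:ℂ)+1) * v^(n+1) * w^n) 0 a := hasDerivAt_const _ _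
  rw [(hN.fun_div hM hMne).deriv]
  push_cast
  field_simp
  ring

/-- The determinant of the 2×2 Hermitian matrix `h_{αβ̄} = ∂²u/∂z_α∂z̄_β` obtained from
the Kähler potential `u = log(1 + |z₁|^{2p} + |z₂|^{2q})` equals
`p²q²|z₁|^{2(p-1)}|z₂|^{2(q-1)}/(1 + |z₁|^{2p} + |z₂|^{2q})³` wherever `z₁, z₂ ≠ 0`. -/
theorem stmt_2 (p q : ℕ) (hp : 0 < p) (hq : 0 < q) (z : Fin 2 → ℂ)
    (h1 : z 0 ≠ 0) (h2 : z 1 ≠ 0) :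
    (Matrix.of fun α β => wirt (upol p q) z α β).det
      = (p:ℂ)^2 * (q:ℂ)^2 * ((Complex.normSq (z 0) : ℂ))^(p-1)
          * ((Complex.normSq (z 1) : ℂ))^(q-1)
        / (1 + ((Complex.normSq (z 0) : ℂ))^p + ((Complex.normSq (z 1) : ℂ))^q)^3 := by
  obtain ⟨m, rfl⟩ : ∃ m, p = m + 1 := ⟨p - 1, (Nat.succ_pred_eq_of_pos hp).symm⟩
  obtain ⟨n, rfl⟩ : ∃ n, q = n + 1 := ⟨q - 1, (Nat.succ_pred_eq_of_pos hq).symm⟩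
  set c0 := (starRingEnd ℂ) (z 0) with hc0
  set c1 := (starRingEnd ℂ) (z 1) with hc1
  have hA : z 0 * c0 = ((Complex.normSq (z 0) : ℝ) : ℂ) := Complex.mul_conj (z 0)
  have hB : z 1 * c1 = ((Complex.normSq (z 1) : ℝ) : ℂ) := Complex.mul_conj (z 1)
  have h3 := pow_nonneg (Complex.normSq_nonneg (z 0)) (m+1)
  have h4 := pow_nonneg (Complex.normSq_nonneg (z 1)) (n+1)
  have hD1 : (1 + (z 1 * c1)^(n+1)) + (z 0 * c0)^(m+1) ∈ Complex.slitPlane := by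
    rw [hA, hB]
    refine Complex.mem_slitPlane_iff.mpr (Or.inl ?_)
    simp only [← Complex.ofReal_pow, ← Complex.ofReal_one, ← Complex.ofReal_add,
      Complex.ofReal_re]
    linarith
  have hD2 : (1 + (z 0 * c0)^(m+1)) + (z 1 * c1)^(n+1) ∈ Complex.slitPlane := by
    rw [add_right_comm] at hD1; exact hD1
  have hDne : (1 + (z 0 * c0)^(m+1)) + (z 1 * c1)^(n+1) ≠ 0 :=
    Complex.slitPlane_ne_zero hD2
  have e00 : wirt (upol (m+1) (n+1)) z 0 0
      = ((m:ℂ)+1)^2 * (z 0 * c0)^m * (1 + (z 1 * c1)^(n+1))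
        / ((1 + (z 1 * c1)^(n+1)) + (z 0 * c0)^(m+1))^2 := by
    have := outer_diag m (z 0) c0 (1 + (z 1 * c1)^(n+1)) hD1
    rw [wirt, ← this]
    congr 1
    try (funext s; congr 1; funext t; simp [upol, Function.update]; try ring_nf)
    all_goals rfl
  have e11 : wirt (upol (m+1) (n+1)) z 1 1
      = ((n:ℂ)+1)^2 * (z 1 * c1)^n * (1 + (z 0 * c0)^(m+1))
        / ((1 + (z 0 * c0)^(m+1)) + (z 1 * c1)^(n+1))^2 := by
    have := outer_diag n (z 1) c1 (1 + (z 0 * c0)^(m+1)) hD2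
    rw [wirt, ← this]
    congr 1
    try (funext s; congr 1; funext t; simp [upol, Function.update]; try ring_nf)
  have e01 : wirt (upol (m+1) (n+1)) z 0 1
      = -(((m:ℂ)+1) * ((n:ℂ)+1) * (z 0 * c0)^m * (z 1 * c1)^n * z 1 * c0)
        / ((1 + (z 0 * c0)^(m+1)) + (z 1 * c1)^(n+1))^2 := by
    have := outer_off m n (z 0) c0 (z 1) c1 hD2
    rw [wirt, ← this]
    congr 1
    try (funext s; congr 1; funext t; simp [upol, Function.update]; try ring_nf)
  have e10 : wirt (upol (m+1) (n+1)) z 1 0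
      = -(((n:ℂ)+1) * ((m:ℂ)+1) * (z 1 * c1)^n * (z 0 * c0)^m * z 0 * c1)
        / ((1 + (z 1 * c1)^(n+1)) + (z 0 * c0)^(m+1))^2 := by
    have := outer_off n m (z 1) c1 (z 0) c0 hD1
    rw [wirt, ← this]
    congr 1
    try (funext s; congr 1; funext t; simp [upol, Function.update]; try ring_nf)
    all_goals rfl
  rw [Matrix.det_fin_two]
  simp only [Matrix.of_apply, e00, e01, e10, e11]
  rw [Nat.add_sub_cancel, Nat.add_sub_cancel, ← hA, ← hB]
  have hDne' : (1 + (z 1 * c1)^(n+1)) + (z 0 * c0)^(m+1) ≠ 0 := by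
    rw [add_right_comm]; exact hDne
  push_cast
  field_simp
  ring
end

section
/- For positive integers p and q, the function Δ(z₁,z₂) = p²q²·|z₁|^{2(p-1)}·|z₂|^{2(q-1)} / (1 + |z₁|^{2p} + |z₂|^{2q})³ satisfies, at every point with z₁, z₂ ≠ 0, the identity -∂²(log Δ)/∂z_α ∂z̄_β = 3·∂²u/∂z_α ∂z̄_β for all α, β ∈ {1,2}, where u(z₁,z₂) = log(1 + |z₁|^{2p} + |z₂|^{2q}). -/
open Complex


lemma cast_mul_pow_sub_one (m : ℕ) (x : ℂ) : (m:ℂ) * x^(m-1) * x = (m:ℂ) * x^m := by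
  rcases m with _|m
  · simp
  · rw [Nat.succ_sub_one, pow_succ]; ring

lemma alggen (c x y P dx dy A B C D mc nc d : ℂ) (hc : c ≠ 0) (hx : x ≠ 0) (hy : y ≠ 0)
    (hP : P ≠ 0) (hA : A ≠ 0) (hC : C ≠ 0)
    (hAB : mc * B * x = mc * A) (hCD : nc * D * y = nc * C) :
    (c * A * C / P^3)⁻¹ *
      (((c * (mc * B * dx) * C + c * A * (nc * D * dy)) * P^3 - c * A * C * (3 * P^2 * d)) /
        (P^3)^2)
    = mc * dx / x + nc * dy / y - 3 * (d / P) := by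
  have hN : c * A * C ≠ 0 := mul_ne_zero (mul_ne_zero hc hA) hC
  have h1 : (c * A * C / P^3)⁻¹ *
      (((c * (mc * B * dx) * C + c * A * (nc * D * dy)) * P^3 - c * A * C * (3 * P^2 * d)) /
        (P^3)^2)
      = (c * (mc * B * dx) * C) / (c * A * C) + (c * A * (nc * D * dy)) / (c * A * C)
        - 3 * (d / P) := by
    field_simp
  have t1 : (c * (mc * B * dx) * C) / (c * A * C) = mc * dx / x := by
    rw [div_eq_div_iff hN hx]
    linear_combination (c * C * dx) * hAB
  have t2 : (c * A * (nc * D * dy)) / (c * A * C) = nc * dy / y := by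
    rw [div_eq_div_iff hN hy]
    linear_combination (c * A * dy) * hCD
  rw [h1, t1, t2]

set_option maxHeartbeats 1000000 in
lemma master (p q : ℕ) (hp : 0 < p) (hq : 0 < q) (c : ℂ)
    (F H G K : ℂ → ℂ) (g k : ℂ) (s₀ t₀ : ℂ)
    (hF : Differentiable ℂ F) (hH : Differentiable ℂ H)
    (hG : HasDerivAt G g t₀) (hK : HasDerivAt K k t₀)
    (hF0 : F s₀ ≠ 0) (hH0 : H s₀ ≠ 0) (hG0 : G t₀ ≠ 0) (hK0 : K t₀ ≠ 0)
    (hP : (1 + (F s₀ * G t₀)^p + (H s₀ * K t₀)^q) ∈ Complex.slitPlane)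
    (hS : (c * (F s₀ * G t₀)^(p-1) * (H s₀ * K t₀)^(q-1) /
        (1 + (F s₀ * G t₀)^p + (H s₀ * K t₀)^q)^3) ∈ Complex.slitPlane) :
    deriv (fun s => deriv (fun t => Complex.log (c * (F s * G t)^(p-1) * (H s * K t)^(q-1)
        / (1 + (F s * G t)^p + (H s * K t)^q)^3)) t₀) s₀
    = -3 * deriv (fun s => deriv (fun t =>
        Complex.log (1 + (F s * G t)^p + (H s * K t)^q)) t₀) s₀ := by
  obtain ⟨m, rfl⟩ : ∃ m, p = m + 1 := ⟨p - 1, (Nat.succ_pred_eq_of_pos hp).symm⟩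
  obtain ⟨n, rfl⟩ : ∃ n, q = n + 1 := ⟨q - 1, (Nat.succ_pred_eq_of_pos hq).symm⟩
  simp only [Nat.add_sub_cancel] at hS ⊢
  have hc : c ≠ 0 := by
    intro h
    exact Complex.slitPlane_ne_zero hS (by simp [h])
  set R : ℂ → ℂ := fun s =>
    (((m:ℂ)+1) * (F s * G t₀)^m * (F s * g) + ((n:ℂ)+1) * (H s * K t₀)^n * (H s * k)) /
      (1 + (F s * G t₀)^(m+1) + (H s * K t₀)^(n+1)) with hRdef
  -- claim 1 : inner derivative of the potential
  have claim1 : ∀ s : ℂ, (1 + (F s * G t₀)^(m+1) + (H s * K t₀)^(n+1)) ∈ Complex.slitPlane →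
      deriv (fun t => Complex.log (1 + (F s * G t)^(m+1) + (H s * K t)^(n+1))) t₀ = R s := by
    intro s hPs
    have hd : HasDerivAt (fun t => 1 + (F s * G t)^(m+1) + (H s * K t)^(n+1))
        ((m+1 : ℕ) * (F s * G t₀)^m * (F s * g) + (n+1 : ℕ) * (H s * K t₀)^n * (H s * k)) t₀ :=
      (((hG.const_mul (F s)).pow (m+1)).const_add 1).add ((hK.const_mul (H s)).pow (n+1))
    have hlog : HasDerivAt (fun t => Complex.log (1 + (F s * G t)^(m+1) + (H s * K t)^(n+1)))
        ((1 + (F s * G t₀)^(m+1) + (H s * K t₀)^(n+1))⁻¹ *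
         ((m+1 : ℕ) * (F s * G t₀)^m * (F s * g) + (n+1 : ℕ) * (H s * K t₀)^n * (H s * k))) t₀ :=
      by have := (Complex.hasDerivAt_log hPs).comp t₀ hd; exact this
    rw [hlog.deriv, hRdef]
    push_cast
    rw [inv_mul_eq_div]
  -- claim 2 : inner derivative of log Delta
  have claim2 : ∀ s : ℂ, F s ≠ 0 → H s ≠ 0 →
      (1 + (F s * G t₀)^(m+1) + (H s * K t₀)^(n+1)) ∈ Complex.slitPlane →
      (c * (F s * G t₀)^m * (H s * K t₀)^n /
        (1 + (F s * G t₀)^(m+1) + (H s * K t₀)^(n+1))^3) ∈ Complex.slitPlane →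
      deriv (fun t => Complex.log (c * (F s * G t)^m * (H s * K t)^n
          / (1 + (F s * G t)^(m+1) + (H s * K t)^(n+1))^3)) t₀
        = (m : ℂ) * g / G t₀ + (n : ℂ) * k / K t₀ - 3 * R s := by
    intro s hsF hsH hsP hsS
    have hP0 : (1 + (F s * G t₀)^(m+1) + (H s * K t₀)^(n+1)) ≠ 0 :=
      Complex.slitPlane_ne_zero hsP
    have hx : F s * G t₀ ≠ 0 := mul_ne_zero hsF hG0
    have hy : H s * K t₀ ≠ 0 := mul_ne_zero hsH hK0
    have hNum : HasDerivAt (fun t => c * (F s * G t)^m * (H s * K t)^n)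
        (c * ((m : ℕ) * (F s * G t₀)^(m-1) * (F s * g)) * (H s * K t₀)^n +
         c * (F s * G t₀)^m * ((n : ℕ) * (H s * K t₀)^(n-1) * (H s * k))) t₀ :=
      (((hG.const_mul (F s)).pow m).const_mul c).mul ((hK.const_mul (H s)).pow n)
    have hd : HasDerivAt (fun t => 1 + (F s * G t)^(m+1) + (H s * K t)^(n+1))
        ((m+1 : ℕ) * (F s * G t₀)^m * (F s * g) + (n+1 : ℕ) * (H s * K t₀)^n * (H s * k)) t₀ :=
      (((hG.const_mul (F s)).pow (m+1)).const_add 1).add ((hK.const_mul (H s)).pow (n+1))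
    have hP3 : HasDerivAt (fun t => (1 + (F s * G t)^(m+1) + (H s * K t)^(n+1))^3)
        ((3 : ℕ) * (1 + (F s * G t₀)^(m+1) + (H s * K t₀)^(n+1))^2 *
          ((m+1 : ℕ) * (F s * G t₀)^m * (F s * g) + (n+1 : ℕ) * (H s * K t₀)^n * (H s * k))) t₀ :=
      hd.pow 3
    have hquot := hNum.div hP3 (pow_ne_zero 3 hP0)
    have hlog := (Complex.hasDerivAt_log hsS).comp t₀ hquot
    have heq : deriv (fun t => Complex.log (c * (F s * G t)^m * (H s * K t)^n
          / (1 + (F s * G t)^(m+1) + (H s * K t)^(n+1))^3)) t₀ = _ := hlog.deriv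
    rw [heq, hRdef]
    set x := F s * G t₀ with hxd
    set y := H s * K t₀ with hyd
    set P := 1 + x^(m+1) + y^(n+1) with hPd
    have egx : (m : ℂ) * g / G t₀ = (m : ℂ) * (F s * g) / x := by
      rw [hxd, mul_div_assoc, mul_div_assoc, mul_div_mul_left _ _ hsF]
    have egy : (n : ℂ) * k / K t₀ = (n : ℂ) * (H s * k) / y := by
      rw [hyd, mul_div_assoc, mul_div_assoc, mul_div_mul_left _ _ hsH]
    rw [egx, egy]
    beta_reduce
    push_cast
    linear_combination alggen c x y P (F s * g) (H s * k) (x^m) (x^(m-1)) (y^n) (y^(n-1))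
      (m : ℂ) (n : ℂ)
      (((m:ℂ)+1) * x^m * (F s * g) + ((n:ℂ)+1) * y^n * (H s * k))
      hc hx hy hP0 (pow_ne_zero _ hx) (pow_ne_zero _ hy)
      (cast_mul_pow_sub_one m x) (cast_mul_pow_sub_one n y)
  -- now the outer derivative
  have cF : Continuous F := hF.continuous
  have cH : Continuous H := hH.continuous
  have hcontP : Continuous fun s => 1 + (F s * G t₀)^(m+1) + (H s * K t₀)^(n+1) := by
    fun_prop
  have hcontN : Continuous fun s => c * (F s * G t₀)^m * (H s * K t₀)^n := by fun_prop
  have hPev : ∀ᶠ s in nhds s₀, (1 + (F s * G t₀)^(m+1) + (H s * K t₀)^(n+1)) ∈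
      Complex.slitPlane :=
    hcontP.continuousAt.eventually_mem (Complex.isOpen_slitPlane.mem_nhds hP)
  have hFev : ∀ᶠ s in nhds s₀, F s ≠ 0 := cF.continuousAt.eventually_ne hF0
  have hHev : ∀ᶠ s in nhds s₀, H s ≠ 0 := cH.continuousAt.eventually_ne hH0
  have hSev : ∀ᶠ s in nhds s₀, (c * (F s * G t₀)^m * (H s * K t₀)^n /
      (1 + (F s * G t₀)^(m+1) + (H s * K t₀)^(n+1))^3) ∈ Complex.slitPlane := by
    refine ContinuousAt.eventually_mem ?_ (Complex.isOpen_slitPlane.mem_nhds hS)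
    exact hcontN.continuousAt.div ((hcontP.pow 3).continuousAt)
      (pow_ne_zero 3 (Complex.slitPlane_ne_zero hP))
  have hEu : (fun s => deriv (fun t =>
      Complex.log (1 + (F s * G t)^(m+1) + (H s * K t)^(n+1))) t₀) =ᶠ[nhds s₀] R := by
    filter_upwards [hPev] with s hs using claim1 s hs
  have hEd : (fun s => deriv (fun t => Complex.log (c * (F s * G t)^m * (H s * K t)^n
      / (1 + (F s * G t)^(m+1) + (H s * K t)^(n+1))^3)) t₀) =ᶠ[nhds s₀]
      (fun s => ((m : ℂ) * g / G t₀ + (n : ℂ) * k / K t₀) - 3 * R s) := by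
    filter_upwards [hFev, hHev, hPev, hSev] with s h1 h2 h3 h4
    exact claim2 s h1 h2 h3 h4
  have hRdiff : DifferentiableAt ℂ R s₀ := by
    rw [hRdef]
    apply DifferentiableAt.div
    · fun_prop
    · fun_prop
    · exact Complex.slitPlane_ne_zero hP
  rw [hEu.deriv_eq, hEd.deriv_eq, deriv_const_sub, deriv_const_mul 3 hRdiff]
  ring

/-- `log Δ` for `Δ = p²q²|z₁|^{2(p-1)}|z₂|^{2(q-1)}/(1+|z₁|^{2p}+|z₂|^{2q})³`, polarized. -/
noncomputable def logDelta (p q : ℕ) : (Fin 2 → ℂ) → (Fin 2 → ℂ) → ℂ :=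
  fun z w => Complex.log ((p:ℂ)^2 * (q:ℂ)^2 * (z 0 * w 0)^(p-1) * (z 1 * w 1)^(q-1)
    / (1 + (z 0 * w 0)^p + (z 1 * w 1)^q)^3)

/-- Einstein condition: `−∂²(log Δ)/∂z_α∂z̄_β = 3·∂²u/∂z_α∂z̄_β` at every point with
`z₁, z₂ ≠ 0`, i.e. the branched-cover metric is Kähler–Einstein with constant 3. -/
theorem stmt_3 (p q : ℕ) (hp : 0 < p) (hq : 0 < q) (z : Fin 2 → ℂ)
    (h1 : z 0 ≠ 0) (h2 : z 1 ≠ 0) (α β : Fin 2) :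
    -(wirt (logDelta p q) z α β) = 3 * wirt (upol p q) z α β := by
  have hc1 : (starRingEnd ℂ) (z 0) ≠ 0 := by simpa using h1
  have hc2 : (starRingEnd ℂ) (z 1) ≠ 0 := by simpa using h2
  have hn1 : 0 < Complex.normSq (z 0) := Complex.normSq_pos.2 h1
  have hn2 : 0 < Complex.normSq (z 1) := Complex.normSq_pos.2 h2
  have hp' : (0:ℝ) < (p:ℝ) := by exact_mod_cast hp
  have hq' : (0:ℝ) < (q:ℝ) := by exact_mod_cast hq
  have hPmem : (1 + (z 0 * (starRingEnd ℂ) (z 0))^p + (z 1 * (starRingEnd ℂ) (z 1))^q)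
      ∈ Complex.slitPlane := by
    rw [Complex.mul_conj, Complex.mul_conj]
    have : ((1:ℂ) + (Complex.normSq (z 0) : ℂ)^p + (Complex.normSq (z 1) : ℂ)^q)
        = ((1 + Complex.normSq (z 0)^p + Complex.normSq (z 1)^q : ℝ) : ℂ) := by
      push_cast; ring
    rw [this, Complex.ofReal_mem_slitPlane]
    positivity
  have hSmem : ((p:ℂ)^2 * (q:ℂ)^2 * (z 0 * (starRingEnd ℂ) (z 0))^(p-1) *
        (z 1 * (starRingEnd ℂ) (z 1))^(q-1) /
      (1 + (z 0 * (starRingEnd ℂ) (z 0))^p + (z 1 * (starRingEnd ℂ) (z 1))^q)^3)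
      ∈ Complex.slitPlane := by
    rw [Complex.mul_conj, Complex.mul_conj]
    have : ((p:ℂ)^2 * (q:ℂ)^2 * (Complex.normSq (z 0) : ℂ)^(p-1) *
          (Complex.normSq (z 1) : ℂ)^(q-1) /
        (1 + (Complex.normSq (z 0) : ℂ)^p + (Complex.normSq (z 1) : ℂ)^q)^3)
        = (((p:ℝ)^2 * (q:ℝ)^2 * Complex.normSq (z 0)^(p-1) * Complex.normSq (z 1)^(q-1) /
        (1 + Complex.normSq (z 0)^p + Complex.normSq (z 1)^q)^3 : ℝ) : ℂ) := by
      push_cast; ring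
    rw [this, Complex.ofReal_mem_slitPlane]
    positivity
  fin_cases α <;> fin_cases β <;>
    simp only [wirt, upol, logDelta, Fin.zero_eta, Fin.mk_one, Fin.isValue,
      Function.update_self, Function.update_of_ne, ne_eq, zero_ne_one, not_false_iff,
      one_ne_zero]
  · have h := master p q hp hq ((p:ℂ)^2 * (q:ℂ)^2)
      (fun s => s) (fun _ => z 1) (fun t => t) (fun _ => (starRingEnd ℂ) (z 1)) 1 0
      (z 0) ((starRingEnd ℂ) (z 0)) (by fun_prop) (by fun_prop)
      (hasDerivAt_id' _) (hasDerivAt_const _ _) h1 h2 hc1 hc2 hPmem hSmem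
    beta_reduce at h
    rw [h]; ring
  · have h := master p q hp hq ((p:ℂ)^2 * (q:ℂ)^2)
      (fun s => s) (fun _ => z 1) (fun _ => (starRingEnd ℂ) (z 0)) (fun t => t) 0 1
      (z 0) ((starRingEnd ℂ) (z 1)) (by fun_prop) (by fun_prop)
      (hasDerivAt_const _ _) (hasDerivAt_id' _) h1 h2 hc1 hc2 hPmem hSmem
    beta_reduce at h
    rw [h]; ring
  · have h := master p q hp hq ((p:ℂ)^2 * (q:ℂ)^2)
      (fun _ => z 0) (fun s => s) (fun t => t) (fun _ => (starRingEnd ℂ) (z 1)) 1 0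
      (z 1) ((starRingEnd ℂ) (z 0)) (by fun_prop) (by fun_prop)
      (hasDerivAt_id' _) (hasDerivAt_const _ _) h1 h2 hc1 hc2 hPmem hSmem
    beta_reduce at h
    rw [h]; ring
  · have h := master p q hp hq ((p:ℂ)^2 * (q:ℂ)^2)
      (fun _ => z 0) (fun s => s) (fun _ => (starRingEnd ℂ) (z 0)) (fun t => t) 0 1
      (z 1) ((starRingEnd ℂ) (z 1)) (by fun_prop) (by fun_prop)
      (hasDerivAt_const _ _) (hasDerivAt_id' _) h1 h2 hc1 hc2 hPmem hSmem
    beta_reduce at h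
    rw [h]; ring
end

section
/- Let D₁ ≥ D₂ ≥ … ≥ D_k > 0 and β > 0, and suppose ε := Σ_{j≥2} e^{β(Dⱼ−D₁)} is small. Then the weighted average (Σᵢ Dᵢ e^{β Dᵢ})/(Σᵢ e^{β Dᵢ}) equals D₁·(1 − Σ_{j≥2}(1 − Dⱼ/D₁)e^{β(Dⱼ−D₁)}) + O(ε²), i.e., the difference between the two quantities is bounded by a constant times D₁·ε². -/
open Finset Real

/-- For `D₀ ≥ D₁ ≥ … ≥ D_k > 0` and `β > 0`, if `ε := Σ_{j≥1} e^{β(Dⱼ−D₀)}` is small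
(`ε ≤ 1/2`), then the weighted average `(ΣᵢDᵢe^{βDᵢ})/(Σᵢe^{βDᵢ})` equals
`D₀·(1 − Σ_{j≥1}(1 − Dⱼ/D₀)e^{β(Dⱼ−D₀)})` up to an error bounded by a constant times
`D₀·ε²`. -/
theorem stmt_13 :
    ∃ C : ℝ, 0 < C ∧
      ∀ (k : ℕ) (D : Fin (k+1) → ℝ), Antitone D → (∀ i, 0 < D i) →
        ∀ β : ℝ, 0 < β →
          (∑ j ∈ Finset.univ.erase (0 : Fin (k+1)), Real.exp (β * (D j - D 0))) ≤ 1/2 →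
          |(∑ i, D i * Real.exp (β * D i)) / (∑ i, Real.exp (β * D i))
              - D 0 * (1 - ∑ j ∈ Finset.univ.erase (0 : Fin (k+1)),
                  (1 - D j / D 0) * Real.exp (β * (D j - D 0)))|
            ≤ C * D 0 *
              (∑ j ∈ Finset.univ.erase (0 : Fin (k+1)), Real.exp (β * (D j - D 0)))^2 := by
  refine ⟨1, one_pos, ?_⟩
  intro k D hD hDpos β hβ hεle
  set s := Finset.univ.erase (0 : Fin (k+1)) with hs
  set ε := ∑ j ∈ s, Real.exp (β * (D j - D 0)) with hεdef
  set S := ∑ j ∈ s, (D j / D 0) * Real.exp (β * (D j - D 0)) with hSdef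
  have hε0 : 0 ≤ ε := Finset.sum_nonneg fun j _ => (Real.exp_pos _).le
  have hS0 : 0 ≤ S := Finset.sum_nonneg fun j _ =>
    mul_nonneg (div_nonneg (hDpos j).le (hDpos 0).le) (Real.exp_pos _).le
  have hSε : S ≤ ε := Finset.sum_le_sum fun j _ => by
    have h1 : D j / D 0 ≤ 1 := div_le_one_of_le₀ (hD (Fin.zero_le j)) (hDpos 0).le
    nlinarith [Real.exp_pos (β * (D j - D 0))]
  have h0ne : D 0 ≠ 0 := (hDpos 0).ne'
  have hterm : ∀ j, Real.exp (β * D j)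
      = Real.exp (β * D 0) * Real.exp (β * (D j - D 0)) := fun j => by
    rw [← Real.exp_add]; congr 1; ring
  have hsum1 : (∑ i, Real.exp (β * D i)) = Real.exp (β * D 0) * (1 + ε) := by
    rw [← Finset.add_sum_erase Finset.univ _ (Finset.mem_univ (0 : Fin (k+1)))]
    rw [hεdef, mul_add, mul_one, Finset.mul_sum]
    exact congrArg _ (Finset.sum_congr rfl fun j _ => hterm j)
  have hsum2 : (∑ i, D i * Real.exp (β * D i))
      = Real.exp (β * D 0) * D 0 * (1 + S) := by
    rw [← Finset.add_sum_erase Finset.univ _ (Finset.mem_univ (0 : Fin (k+1)))]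
    rw [hSdef, mul_add, mul_one, Finset.mul_sum]
    refine congrArg₂ _ (by ring) (Finset.sum_congr rfl fun j _ => ?_)
    rw [hterm j]; field_simp
  have hsum3 : (∑ j ∈ s, (1 - D j / D 0) * Real.exp (β * (D j - D 0))) = ε - S := by
    rw [hεdef, hSdef, ← Finset.sum_sub_distrib]
    exact Finset.sum_congr rfl fun j _ => by ring
  rw [hsum1, hsum2, hsum3]
  have h1ε : (0:ℝ) < 1 + ε := by linarith
  have key : Real.exp (β * D 0) * D 0 * (1 + S) / (Real.exp (β * D 0) * (1 + ε))
      - D 0 * (1 - (ε - S)) = D 0 * (ε * (ε - S)) / (1 + ε) := by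
    have hexp : Real.exp (β * D 0) ≠ 0 := (Real.exp_pos _).ne'
    field_simp
    ring
  rw [key, abs_div, abs_of_pos h1ε,
    abs_of_nonneg (mul_nonneg (hDpos 0).le (mul_nonneg hε0 (by linarith)))]
  rw [div_le_iff₀ h1ε]
  nlinarith [mul_nonneg (mul_nonneg (hDpos 0).le hε0) hS0, mul_nonneg (mul_nonneg (hDpos 0).le (sq_nonneg ε)) hε0]
end
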